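/- Let σ ∈ (0,1). Then the constant c(σ) := ∫_0^∞ (s² + 1)^{−(1+σ)/2} ds is finite, and for every R > 0 and every y > 0 one has ∫_0^R r^{1−σ} ((r² + y²)^{(1+σ)/2} − r^{1+σ}) / (r² + y²)^{(1+σ)/2} dr ≤ ((1+σ)/2) · c(σ) · y^{2−σ}. -/

import Mathlib

open MeasureTheory Set

lemma aux_integrable (σ : ℝ) (hσ : σ ∈ Set.Ioo (0:ℝ) 1) :
    IntegrableOn (fun s : ℝ => (s ^ 2 + 1) ^ (-(1 + σ) / 2)) (Set.Ioi 0) volume := by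
  obtain ⟨hσ0, hσ1⟩ := hσ
  have hcont : Continuous fun s : ℝ => (s ^ 2 + 1) ^ (-(1 + σ) / 2) := by
    apply ((continuous_pow 2).add continuous_const).rpow_const
    intro x
    left
    exact (by positivity : (0:ℝ) < x ^ 2 + 1).ne'
  have h1 : IntegrableOn (fun s : ℝ => (s ^ 2 + 1) ^ (-(1 + σ) / 2)) (Set.Ioc 0 1) volume :=
    hcont.continuousOn.integrableOn_Icc.mono_set Ioc_subset_Icc_self
  have h2 : IntegrableOn (fun s : ℝ => (s ^ 2 + 1) ^ (-(1 + σ) / 2)) (Set.Ioi 1) volume := by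
    have hbig : IntegrableOn (fun s : ℝ => s ^ (-(1 + σ))) (Set.Ioi 1) volume :=
      integrableOn_Ioi_rpow_of_lt (by linarith) one_pos
    refine hbig.mono' hcont.aestronglyMeasurable.restrict ?_
    filter_upwards [ae_restrict_mem measurableSet_Ioi] with s hs
    have hs1 : (1:ℝ) < s := hs
    have hs0 : (0:ℝ) < s := by linarith
    rw [Real.norm_eq_abs, abs_of_nonneg (by positivity)]
    have heq : ((s:ℝ) ^ 2) ^ (-(1 + σ) / 2) = s ^ (-(1 + σ)) := by
      rw [← Real.rpow_natCast s 2, ← Real.rpow_mul hs0.le]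
      congr 1
      push_cast
      ring
    rw [← heq]
    exact Real.rpow_le_rpow_of_nonpos (by positivity) (by linarith) (by linarith)
  refine (h1.union h2).mono_set ?_
  intro x hx
  rcases le_or_gt x 1 with h | h
  · exact Or.inl ⟨hx, h⟩
  · exact Or.inr h

theorem stmt6 (σ : ℝ) (hσ : σ ∈ Set.Ioo (0:ℝ) 1) :
    IntegrableOn (fun s : ℝ => (s ^ 2 + 1) ^ (-(1 + σ) / 2)) (Set.Ioi 0) volume
    ∧ ∀ R > (0:ℝ), ∀ y > (0:ℝ),
        (∫ r in (0:ℝ)..R,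
          r ^ (1 - σ) *
            ((r ^ 2 + y ^ 2) ^ ((1 + σ) / 2) - r ^ (1 + σ)) /
              (r ^ 2 + y ^ 2) ^ ((1 + σ) / 2))
        ≤ ((1 + σ) / 2) * (∫ s in Set.Ioi (0:ℝ), (s ^ 2 + 1) ^ (-(1 + σ) / 2)) *
            y ^ (2 - σ) := by
  obtain ⟨hσ0, hσ1⟩ := hσ
  have hf := aux_integrable σ ⟨hσ0, hσ1⟩
  refine ⟨hf, ?_⟩
  intro R hR y hy
  set p : ℝ := (1 + σ) / 2 with hp
  have hp0 : 0 < p := by rw [hp]; linarith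
  have hp1 : p ≤ 1 := by rw [hp]; linarith
  set c : ℝ := ∫ s in Set.Ioi (0:ℝ), (s ^ 2 + 1) ^ (-(1 + σ) / 2) with hc
  have hden : ∀ r : ℝ, (0:ℝ) < r ^ 2 + y ^ 2 := fun r => by positivity
  set g : ℝ → ℝ := fun r =>
    r ^ (1 - σ) * ((r ^ 2 + y ^ 2) ^ p - r ^ (1 + σ)) / (r ^ 2 + y ^ 2) ^ p with hg
  set h : ℝ → ℝ := fun r => p * y ^ 2 * (r ^ 2 + y ^ 2) ^ (-p) with hh
  -- pointwise bound on [0, R]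
  have key : ∀ r ∈ Set.Icc (0:ℝ) R, g r ≤ h r := by
    intro r hr
    have hr0 : 0 ≤ r := hr.1
    have hD : (0:ℝ) < (r ^ 2 + y ^ 2) ^ p := Real.rpow_pos_of_pos (hden r) p
    rcases eq_or_lt_of_le hr0 with hr0' | hr0'
    · simp only [hg, hh, ← hr0']
      rw [Real.zero_rpow (by linarith : (1:ℝ) - σ ≠ 0)]
      have h1 := Real.rpow_pos_of_pos (hden 0) (-p)
      simp only [zero_mul, zero_div]
      positivity
    · -- r > 0
      have hrpow : r ^ (1 + σ) = (r ^ 2) ^ p := by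
        rw [← Real.rpow_natCast r 2, ← Real.rpow_mul hr0]
        congr 1
        push_cast
        rw [hp]
        ring
      have hbern : (r ^ 2 + y ^ 2) ^ p ≤ r ^ (1 + σ) + p * (y ^ 2 / r ^ 2) * r ^ (1 + σ) := by
        have hs : (0:ℝ) ≤ y ^ 2 / r ^ 2 := by positivity
        have hB := rpow_one_add_le_one_add_mul_self
          (by linarith : (-1:ℝ) ≤ y ^ 2 / r ^ 2) hp0.le hp1
        calc (r ^ 2 + y ^ 2) ^ p = (r ^ 2 * (1 + y ^ 2 / r ^ 2)) ^ p := by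
              congr 1; field_simp
          _ = (r ^ 2) ^ p * (1 + y ^ 2 / r ^ 2) ^ p :=
              Real.mul_rpow (by positivity) (by linarith)
          _ ≤ (r ^ 2) ^ p * (1 + p * (y ^ 2 / r ^ 2)) :=
              mul_le_mul_of_nonneg_left hB (by positivity)
          _ = r ^ (1 + σ) + p * (y ^ 2 / r ^ 2) * r ^ (1 + σ) := by rw [hrpow]; ring
      have hmul : r ^ (1 - σ) * (p * (y ^ 2 / r ^ 2) * r ^ (1 + σ)) = p * y ^ 2 := by
        have hrr : r ^ (1 - σ) * r ^ (1 + σ) = r ^ 2 := by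
          rw [← Real.rpow_add hr0', ← Real.rpow_natCast r 2]
          norm_num
        have e1 : r ^ (1 - σ) * (p * (y ^ 2 / r ^ 2) * r ^ (1 + σ))
            = p * (y ^ 2 / r ^ 2) * (r ^ (1 - σ) * r ^ (1 + σ)) := by ring
        rw [e1, hrr]
        field_simp
      have hgle : g r ≤ p * y ^ 2 / (r ^ 2 + y ^ 2) ^ p := by
        simp only [hg]
        rw [div_le_div_iff_of_pos_right hD]
        calc r ^ (1 - σ) * ((r ^ 2 + y ^ 2) ^ p - r ^ (1 + σ))
            ≤ r ^ (1 - σ) * (p * (y ^ 2 / r ^ 2) * r ^ (1 + σ)) := by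
              apply mul_le_mul_of_nonneg_left (by linarith) (by positivity)
          _ = p * y ^ 2 := hmul
      calc g r ≤ p * y ^ 2 / (r ^ 2 + y ^ 2) ^ p := hgle
        _ = h r := by
            simp only [hh]
            rw [Real.rpow_neg (hden r).le]
            ring
  -- continuity / integrability on [0, R]
  have c2 : Continuous fun r : ℝ => (r ^ 2 + y ^ 2) ^ p :=
    ((continuous_pow 2).add continuous_const).rpow_const fun x => Or.inl (hden x).ne'
  have c2' : Continuous fun r : ℝ => (r ^ 2 + y ^ 2) ^ (-p) :=
    ((continuous_pow 2).add continuous_const).rpow_const fun x => Or.inl (hden x).ne'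
  have c1 : Continuous fun r : ℝ => r ^ (1 - σ) :=
    continuous_id.rpow_const fun x => Or.inr (by linarith)
  have c3 : Continuous fun r : ℝ => r ^ (1 + σ) :=
    continuous_id.rpow_const fun x => Or.inr (by linarith)
  have hcontg : Continuous g :=
    ((c1.mul (c2.sub c3)).div c2) fun x => (Real.rpow_pos_of_pos (hden x) p).ne'
  have hconth : Continuous h := (continuous_const.mul c2')
  have hIg : IntervalIntegrable g volume 0 R := hcontg.intervalIntegrable 0 R
  have hIh : IntervalIntegrable h volume 0 R := hconth.intervalIntegrable 0 R
  have step1 : (∫ r in (0:ℝ)..R, g r) ≤ ∫ r in (0:ℝ)..R, h r :=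
    intervalIntegral.integral_mono_on hR.le hIg hIh key
  -- the comparison function integrates against the improper integral
  set k : ℝ → ℝ := fun r => (r ^ 2 + y ^ 2) ^ (-p) with hk
  have heqk : ∀ r : ℝ, k r = (y ^ 2) ^ (-p) * ((y⁻¹ * r) ^ 2 + 1) ^ (-(1 + σ) / 2) := by
    intro r
    have h1 : (y⁻¹ * r) ^ 2 + 1 = (r ^ 2 + y ^ 2) / y ^ 2 := by field_simp
    have hnp : -(1 + σ) / 2 = -p := by rw [hp]; ring
    rw [hk, h1, hnp, Real.div_rpow (hden r).le (by positivity)]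
    have hy2 : (0:ℝ) < (y ^ 2) ^ (-p) := Real.rpow_pos_of_pos (by positivity) _
    field_simp
  have hk_int : IntegrableOn k (Set.Ioi 0) volume := by
    have hcomp : IntegrableOn (fun r : ℝ => ((y⁻¹ * r) ^ 2 + 1) ^ (-(1 + σ) / 2))
        (Set.Ioi 0) volume := by
      have := (integrableOn_Ioi_comp_mul_left_iff
        (fun s : ℝ => (s ^ 2 + 1) ^ (-(1 + σ) / 2)) 0 (inv_pos.mpr hy)).mpr
        (by simpa using hf)
      simpa using this
    have h3 := hcomp.const_mul ((y ^ 2) ^ (-p))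
    exact IntegrableOn.congr_fun h3 (fun x _ => (heqk x).symm) measurableSet_Ioi
  have hknonneg : ∀ r : ℝ, 0 ≤ k r := fun r => (Real.rpow_pos_of_pos (hden r) _).le
  have step2 : (∫ r in Set.Ioc (0:ℝ) R, k r) ≤ ∫ r in Set.Ioi (0:ℝ), k r := by
    apply setIntegral_mono_set hk_int
    · exact Filter.Eventually.of_forall fun r => hknonneg r
    · exact Filter.Eventually.of_forall Ioc_subset_Ioi_self
  have hval : (∫ r in Set.Ioi (0:ℝ), k r) = (y ^ 2) ^ (-p) * (y * c) := by
    calc (∫ r in Set.Ioi (0:ℝ), k r)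
        = ∫ r in Set.Ioi (0:ℝ), (y ^ 2) ^ (-p) *
            ((y⁻¹ * r) ^ 2 + 1) ^ (-(1 + σ) / 2) := by
          exact setIntegral_congr_fun measurableSet_Ioi fun r _ => heqk r
      _ = (y ^ 2) ^ (-p) * ∫ r in Set.Ioi (0:ℝ),
            ((y⁻¹ * r) ^ 2 + 1) ^ (-(1 + σ) / 2) := by
          rw [integral_const_mul]
      _ = (y ^ 2) ^ (-p) * (y * c) := by
          congr 1
          have := integral_comp_mul_left_Ioi
            (fun s : ℝ => (s ^ 2 + 1) ^ (-(1 + σ) / 2)) 0 (inv_pos.mpr hy)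
          simpa [smul_eq_mul, hc, inv_inv] using this
  have hIoc : (∫ r in (0:ℝ)..R, h r) = p * y ^ 2 * ∫ r in Set.Ioc (0:ℝ) R, k r := by
    rw [intervalIntegral.integral_of_le hR.le]
    simp only [hh, hk]
    rw [integral_const_mul]
  have hcnonneg : 0 ≤ ∫ r in Set.Ioi (0:ℝ), k r :=
    setIntegral_nonneg measurableSet_Ioi fun r _ => hknonneg r
  have hfinal : p * y ^ 2 * ((y ^ 2) ^ (-p) * (y * c)) = (1 + σ) / 2 * c * y ^ (2 - σ) := by
    have hy2 : y ^ 2 * ((y ^ 2) ^ (-p) * y) = y ^ (2 - σ) := by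
      calc y ^ 2 * ((y ^ 2) ^ (-p) * y)
          = y ^ ((2:ℝ)) * (y ^ ((2:ℝ) * (-p)) * y ^ ((1:ℝ))) := by
            rw [← Real.rpow_natCast y 2, ← Real.rpow_mul hy.le, Real.rpow_one]
            norm_num
        _ = y ^ ((2:ℝ) + ((2:ℝ) * (-p) + (1:ℝ))) := by
            rw [Real.rpow_add hy, Real.rpow_add hy]
        _ = y ^ (2 - σ) := by congr 1; rw [hp]; ring
    calc p * y ^ 2 * ((y ^ 2) ^ (-p) * (y * c))
        = p * c * (y ^ 2 * ((y ^ 2) ^ (-p) * y)) := by ring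
      _ = (1 + σ) / 2 * c * y ^ (2 - σ) := by rw [hy2, hp]
  calc (∫ r in (0:ℝ)..R, g r) ≤ ∫ r in (0:ℝ)..R, h r := step1
    _ = p * y ^ 2 * ∫ r in Set.Ioc (0:ℝ) R, k r := hIoc
    _ ≤ p * y ^ 2 * ∫ r in Set.Ioi (0:ℝ), k r := by
        apply mul_le_mul_of_nonneg_left step2 (by positivity)
    _ = p * y ^ 2 * ((y ^ 2) ^ (-p) * (y * c)) := by rw [hval]
    _ = (1 + σ) / 2 * c * y ^ (2 - σ) := hfinal
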